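/- Let H be a Hopf algebra over k, (V,Y,1,s) an H-module vertex algebra, and (M, Y_M, s_M) a left module over V#H; view M as an H-module via h·m = Res_z z^{−1} Y_M(1#h,z)m and as a V-module via a ↦ Y_M(a#1,z). Then for all a ∈ V, h ∈ H, m ∈ M: (i) h·(Y_M(a#1,z)m) = Σ Y_M(h_1 a#1,z)(h_2·m), and (ii) Y_M(a#h,z)m = Y_M(a#1,z)(h·m). -/
import Mathlib


open scoped TensorProduct DirectSum

namespace HopfVA

/-- Generalized binomial coefficient `C(r, j)` for an integer `r` (exact division). -/
def ibinom (r : ℤ) (j : ℕ) : ℤ := (∏ i ∈ Finset.range j, (r - (i : ℤ))) / (j.factorial : ℤ)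

/-- `(-1)^q` for an integer exponent `q`. -/
def negOnePow (q : ℤ) : ℤ := if Even q then 1 else -1

section Core

variable {k : Type*} [CommRing k] {V : Type*} [AddCommGroup V] [Module k V]

/-- If `f p q` is the coefficient of `z^p w^q` of a two-variable formal distribution,
then `zwMul n f p q` is the coefficient of `z^p w^q` of `(z-w)^n` times that distribution. -/
def zwMul (n : ℕ) (f : ℤ → ℤ → V) : ℤ → ℤ → V := fun p q =>
  ∑ i ∈ Finset.range (n + 1),
    ((-1 : ℤ) ^ i * (n.choose i : ℤ)) • f (p - ((n : ℤ) - (i : ℤ))) (q - (i : ℤ))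

/-- The data of a state-field correspondence on a pointed vector space:
`Y a n b` is the `n`-th product `a_n b` (so that `Y(a,z)b = ∑ (a_n b) z^{-n-1}`),
`vac` is the vacuum vector and `T` is the translation operator. -/
structure VAData (k V : Type*) [CommRing k] [AddCommGroup V] [Module k V] where
  Y : V →ₗ[k] ℤ → Module.End k V
  vac : V
  T : Module.End k V

namespace VAData

variable (F : VAData k V)

/-- coefficient of `z^p w^q` in `Y(a,z)Y(b,w)c`. -/
def prodZW (a b c : V) : ℤ → ℤ → V := fun p q => F.Y a (-p - 1) (F.Y b (-q - 1) c)

/-- coefficient of `z^p w^q` in `Y(b,w)Y(a,z)c`. -/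
def prodWZ (a b c : V) : ℤ → ℤ → V := fun p q => F.Y b (-q - 1) (F.Y a (-p - 1) c)

/-- coefficient of `z^p w^q` in `i_{z,w} Y(a,z-w)Y(b,-w)c`. -/
noncomputable def compLHS (a b c : V) : ℤ → ℤ → V := fun p q =>
  negOnePow q •
    ∑ᶠ j : ℕ, ibinom (p + (j : ℤ)) j • F.Y a (-p - 1 - (j : ℤ)) (F.Y b ((j : ℤ) - 1 - q) c)

/-- Truncated (at `j < J`) version of `compLHS`, for `h`-adic statements. -/
def compLHStr (J : ℕ) (a b c : V) : ℤ → ℤ → V := fun p q =>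
  negOnePow q •
    ∑ j ∈ Finset.range J, ibinom (p + (j : ℤ)) j • F.Y a (-p - 1 - (j : ℤ)) (F.Y b ((j : ℤ) - 1 - q) c)

/-- coefficient of `z^p w^q` in `Y(Y(a,z)b,-w)c`. -/
def compRHS (a b c : V) : ℤ → ℤ → V := fun p q =>
  negOnePow q • F.Y (F.Y a (-p - 1) b) (-q - 1) c

/-- The axioms of a state-field correspondence: truncation, the vacuum axioms
`Y(1,z)a = a`, `Y(a,z)1 = a + (Ta)z + ⋯ ∈ V[[z]]`, and translation covariance
`[T, Y(a,z)] = Y(Ta,z) = ∂_z Y(a,z)`. -/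
def IsStateField : Prop :=
  (∀ a b : V, ∃ N : ℤ, ∀ n : ℤ, N ≤ n → F.Y a n b = 0) ∧
  (∀ (a : V) (n : ℤ), F.Y F.vac n a = if n = -1 then a else 0) ∧
  (∀ (a : V) (n : ℤ), 0 ≤ n → F.Y a n F.vac = 0) ∧
  (∀ a : V, F.Y a (-1) F.vac = a) ∧
  (∀ a : V, F.Y a (-2) F.vac = F.T a) ∧
  (∀ (a b : V) (n : ℤ), F.Y (F.T a) n b = F.T (F.Y a n b) - F.Y a n (F.T b)) ∧
  (∀ (a b : V) (n : ℤ), F.Y (F.T a) n b = (-n : ℤ) • F.Y a (n - 1) b)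

/-- The associativity relation
`(z-w)^N i_{z,w} Y(a,z-w)Y(b,-w)c = (z-w)^N Y(Y(a,z)b,-w)c`. -/
def IsAssocFA : Prop := ∀ a b c : V, ∃ N : ℕ, ∀ p q : ℤ,
  zwMul N (F.compLHS a b c) p q = zwMul N (F.compRHS a b c) p q

/-- A field algebra is a state-field correspondence satisfying associativity. -/
def IsFieldAlgebra : Prop := F.IsStateField ∧ F.IsAssocFA

/-- `(z-w)^n [Y(a,z), Y(b,w)] = 0`. -/
def IsLocalPair (a b : V) : Prop :=
  ∃ n : ℕ, ∀ (c : V) (p q : ℤ), zwMul n (F.prodZW a b c) p q = zwMul n (F.prodWZ a b c) p q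

/-- A vertex algebra is a field algebra all of whose pairs of fields are local. -/
def IsVertexAlgebra : Prop := F.IsFieldAlgebra ∧ ∀ a b : V, F.IsLocalPair a b

/-- `(z-w)^n Y(a,z)Y(b,w) = (z-w)^n ∑ᵢ Y(bⁱ,w)Y(aⁱ,z)`. -/
def IsSLocalPair (a b : V) : Prop :=
  ∃ (n m : ℕ) (A B : Fin m → V), ∀ (c : V) (p q : ℤ),
    zwMul n (F.prodZW a b c) p q = ∑ i, zwMul n (F.prodWZ (A i) (B i) c) p q

/-- An `S`-local vertex algebra is a field algebra all of whose pairs of fields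
are `S`-local. -/
def IsSLocalVA : Prop := F.IsFieldAlgebra ∧ ∀ a b : V, F.IsSLocalPair a b

end VAData

/-- Data of a module over a field algebra: the module fields `Y^M` and translation `sM`. -/
structure VModData (k V M : Type*) [CommRing k] [AddCommGroup V] [Module k V]
    [AddCommGroup M] [Module k M] where
  YM : V →ₗ[k] ℤ → Module.End k M
  sM : Module.End k M

namespace VModData

variable {M : Type*} [AddCommGroup M] [Module k M]

/-- coefficient of `z^p w^q` in `Y^M(a,z)Y^M(b,w)x`. -/
def mprodZW (Mo : VModData k V M) (a b : V) (x : M) : ℤ → ℤ → M := fun p q =>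
  Mo.YM a (-p - 1) (Mo.YM b (-q - 1) x)

/-- coefficient of `z^p w^q` in `Y^M(b,w)Y^M(a,z)x`. -/
def mprodWZ (Mo : VModData k V M) (a b : V) (x : M) : ℤ → ℤ → M := fun p q =>
  Mo.YM b (-q - 1) (Mo.YM a (-p - 1) x)

/-- coefficient of `z^p w^q` in `i_{z,w} Y^M(a,z-w)Y^M(b,-w)x`. -/
noncomputable def mcompLHS (Mo : VModData k V M) (a b : V) (x : M) : ℤ → ℤ → M := fun p q =>
  negOnePow q •
    ∑ᶠ j : ℕ, ibinom (p + (j : ℤ)) j • Mo.YM a (-p - 1 - (j : ℤ)) (Mo.YM b ((j : ℤ) - 1 - q) x)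

/-- coefficient of `z^p w^q` in `Y^M(Y(a,z)b,-w)x`. -/
def mcompRHS (F : VAData k V) (Mo : VModData k V M) (a b : V) (x : M) : ℤ → ℤ → M := fun p q =>
  negOnePow q • Mo.YM (F.Y a (-p - 1) b) (-q - 1) x

/-- `M` is a left module over the field algebra `F`: truncation, vacuum, translation
invariance and the associativity axiom. -/
def IsModule (F : VAData k V) (Mo : VModData k V M) : Prop :=
  (∀ (a : V) (x : M), ∃ N : ℤ, ∀ n : ℤ, N ≤ n → Mo.YM a n x = 0) ∧
  (∀ (x : M) (n : ℤ), Mo.YM F.vac n x = if n = -1 then x else 0) ∧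
  (∀ (a : V) (x : M) (n : ℤ),
      Mo.sM (Mo.YM a n x) - Mo.YM a n (Mo.sM x) = (-n : ℤ) • Mo.YM a (n - 1) x) ∧
  (∀ (a b : V) (x : M), ∃ N : ℕ, ∀ p q : ℤ,
      zwMul N (mcompLHS Mo a b x) p q = zwMul N (mcompRHS F Mo a b x) p q)

/-- Locality of the module fields `Y^M(a,z)`, `Y^M(b,w)`. -/
def IsLocalModPair (Mo : VModData k V M) (a b : V) : Prop :=
  ∃ n : ℕ, ∀ (x : M) (p q : ℤ),
    zwMul n (mprodZW Mo a b x) p q = zwMul n (mprodWZ Mo a b x) p q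

/-- `S`-locality of the module fields. -/
def IsSLocalModPair (Mo : VModData k V M) (a b : V) : Prop :=
  ∃ (n m : ℕ) (A B : Fin m → V), ∀ (x : M) (p q : ℤ),
    zwMul n (mprodZW Mo a b x) p q = ∑ i, zwMul n (mprodWZ Mo (A i) (B i) x) p q

end VModData

/-- The `f`-product `a_(f) b = Res_z f(z) Y(a,z) b`, where `f n` is the coefficient
of `z^n` in `f`. -/
noncomputable def fProduct (F : VAData k V) (f : ℤ → k) (a b : V) : V :=
  ∑ᶠ n : ℤ, f n • F.Y a n b

/-- Coefficients of the formal derivative `∂_z f`. -/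
def derivCoef (f : ℤ → k) : ℤ → k := fun n => ((n : ℤ) + 1 : ℤ) • f (n + 1)

/-- The subspace `V_(g) V` spanned by all products `a_(g) b` with `g = ∂_z f`. -/
noncomputable def gSpan (F : VAData k V) (f : ℤ → k) : Submodule k V :=
  Submodule.span k {x : V | ∃ a b : V, x = fProduct F (derivCoef f) a b}

/-- `x ≡ y mod h^M`, where `h = r`. -/
def ModH (r : k) (M : ℕ) (x y : V) : Prop := ∃ v : V, x - y = r ^ M • v

/-- An automorphism of the (state-field data of a) vertex algebra `F`. -/
def IsVAAut (F : VAData k V) (φ : V ≃ₗ[k] V) : Prop :=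
  φ F.vac = F.vac ∧ (∀ v : V, φ (F.T v) = F.T (φ v)) ∧
  ∀ (a b : V) (n : ℤ), φ (F.Y a n b) = F.Y (φ a) n (φ b)

end Core

/-- The coefficients of `f(z) = z⁻¹`. -/
def zinvCoef (k : Type*) [CommRing k] : ℤ → k := fun n => if n = -1 then 1 else 0

/-- The coefficients of `f(z) = c·e^{cz}/(e^{cz}-1)
  = z⁻¹ + c + ∑_{m≥1} B_m c^m z^{m-1}/m!` (Bernoulli numbers `B_m`). -/
noncomputable def berCoef {k : Type*} [Field k] [CharZero k] (c : k) : ℤ → k := fun n =>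
  if n < -1 then 0
  else ((bernoulli (n + 1).toNat : ℚ) • (c ^ (n + 1).toNat)) / ((n + 1).toNat.factorial : k)
        + (if n = 0 then c else 0)

/-- `f(z) = z⁻¹` or `f(z) = c·e^{cz}/(e^{cz}-1)` with `c ≠ 0`. -/
def AdmissibleF {k : Type*} [Field k] [CharZero k] (f : ℤ → k) : Prop :=
  f = zinvCoef k ∨ ∃ c : k, c ≠ 0 ∧ f = berCoef c

section HopfDefs

variable {k : Type*} [CommRing k] {V : Type*} [AddCommGroup V] [Module k V]
variable (H : Type*) [Ring H] [HopfAlgebra k H]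

/-- `V` is an `H`-module field algebra: `h·1 = ε(h)1`, `h(Ta) = T(ha)` and
`h(aₙb) = ∑ (h₁a)ₙ(h₂b)` (the last condition quantified over all finite
representations of `Δ(h)`). -/
def IsHModuleFA [Module H V] [IsScalarTower k H V] (F : VAData k V) : Prop :=
  (∀ h : H, h • F.vac = (Coalgebra.counit (R := k) h) • F.vac) ∧
  (∀ (h : H) (a : V), h • (F.T a : V) = F.T (h • a)) ∧
  (∀ (h : H) (a b : V) (n : ℤ) (m : ℕ) (h1 h2 : Fin m → H),
      Coalgebra.comul (R := k) h = ∑ i, h1 i ⊗ₜ[k] h2 i →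
      h • (F.Y a n b : V) = ∑ i, F.Y (h1 i • a) n (h2 i • b))

/-- The smash product structure `V # H` on `V ⊗ H`:
`Y(a#h,z)(b#g) = ∑ Y(a,z)(h₁b) # h₂g`, vacuum `1#1`, translation `T#1`. -/
def SmashChar [Module H V] [IsScalarTower k H V] (F : VAData k V)
    (FS : VAData k (V ⊗[k] H)) : Prop :=
  (∀ (a b : V) (h g : H) (n : ℤ) (m : ℕ) (h1 h2 : Fin m → H),
      Coalgebra.comul (R := k) h = ∑ i, h1 i ⊗ₜ[k] h2 i →
      FS.Y (a ⊗ₜ[k] h) n (b ⊗ₜ[k] g) = ∑ i, (F.Y a n (h1 i • b) : V) ⊗ₜ[k] (h2 i * g)) ∧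
  (FS.vac = F.vac ⊗ₜ[k] (1 : H)) ∧
  (∀ (a : V) (h : H), FS.T (a ⊗ₜ[k] h) = (F.T a : V) ⊗ₜ[k] h)

end HopfDefs

/-- The fixed point subspace `V^H = {v | h v = ε(h) v for all h}`. -/
def hFixed (k V H : Type*) [CommRing k] [AddCommGroup V] [Module k V]
    [Ring H] [HopfAlgebra k H] [Module H V] [IsScalarTower k H V]
    [SMulCommClass k H V] : Submodule k V where
  carrier := {v : V | ∀ h : H, h • v = (Coalgebra.counit (R := k) h) • v}
  add_mem' := by
    intro a b ha hb h
    rw [smul_add, ha h, hb h, ← smul_add]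
  zero_mem' := by
    intro h
    simp
  smul_mem' := by
    intro c v hv h
    rw [← smul_comm c h v, hv h, smul_smul, smul_smul, mul_comm]

end HopfVA

namespace HopfVA


section AuxLemmas

lemma prod_range_sub_eq (r : ℤ) (j : ℕ) :
    ∏ i ∈ Finset.range j, (r - (i : ℤ)) = (descPochhammer ℤ j).eval r := by
  induction j with
  | zero => simp
  | succ j ih => rw [Finset.prod_range_succ, ih, descPochhammer_succ_eval]

lemma ibinom_eq_choose (r : ℤ) (j : ℕ) : ibinom r j = Ring.choose r j := by
  rw [ibinom, prod_range_sub_eq, Polynomial.eval_eq_smeval,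
    Ring.descPochhammer_eq_factorial_smul_choose, nsmul_eq_mul]
  exact Int.mul_ediv_cancel_left _ (by exact_mod_cast (Nat.factorial_ne_zero j))

lemma ibinom_zero_right (r : ℤ) : ibinom r 0 = 1 := by simp [ibinom]

lemma ibinom_natCast (n j : ℕ) : ibinom (n : ℤ) j = (n.choose j : ℤ) := by
  rw [ibinom_eq_choose, Ring.choose_natCast]

lemma negOnePow_mul_self (q : ℤ) : negOnePow q * negOnePow q = 1 := by
  by_cases h : Even q <;> simp [negOnePow, h]

lemma negOnePow_zero : negOnePow 0 = 1 := by simp [negOnePow]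

lemma negOnePow_sub_one (r : ℤ) : negOnePow (r - 1) = - negOnePow r := by
  by_cases h : Even r <;> simp [negOnePow, Int.even_sub_one, h]

lemma negOnePow_sub_natCast (q : ℤ) (i : ℕ) :
    negOnePow (q - (i : ℤ)) = (-1 : ℤ) ^ i * negOnePow q := by
  induction i with
  | zero => simp
  | succ i ih =>
      have h : q - ((i : ℤ) + 1) = (q - (i : ℤ)) - 1 := by ring
      push_cast
      rw [h, negOnePow_sub_one, ih, pow_succ]
      ring

lemma neg_one_pow_mul_self (i : ℕ) : (-1 : ℤ) ^ i * (-1 : ℤ) ^ i = 1 := by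
  rw [← pow_add]
  exact Even.neg_one_pow ⟨i, rfl⟩

lemma beta_sum (N Q : ℕ) :
    ∑ i ∈ Finset.range (N + 1),
      (if i ≤ Q then (N.choose i : ℤ) * ibinom ((Q : ℤ) - (N : ℤ)) (Q - i) else 0) = 1 := by
  induction N with
  | zero =>
      rw [Finset.sum_range_one, if_pos (Nat.zero_le Q)]
      norm_num [ibinom_natCast]
  | succ N ih =>
      have pascal : ∀ i : ℕ, i + 1 ≤ Q →
          ibinom ((Q : ℤ) - ((N:ℕ) + 1 : ℤ)) (Q - (i+1)) + ibinom ((Q : ℤ) - ((N:ℕ) + 1 : ℤ)) (Q - i)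
            = ibinom ((Q : ℤ) - (N : ℕ)) (Q - i) := by
        intro i hi
        have hk : Q - i = (Q - (i+1)) + 1 := by omega
        have hx : (Q : ℤ) - (N : ℕ) = ((Q : ℤ) - ((N:ℕ) + 1 : ℤ)) + 1 := by push_cast; ring
        rw [hk, hx, ibinom_eq_choose, ibinom_eq_choose, ibinom_eq_choose,
          Ring.choose_succ_succ]
      have hcast : ((N + 1 : ℕ) : ℤ) = ((N:ℕ) : ℤ) + 1 := by push_cast; ring
      set x : ℤ := (Q : ℤ) - ((N:ℕ) + 1 : ℤ) with hxdef
      set t : ℕ → ℤ := fun i => if i ≤ Q then ibinom x (Q - i) else 0 with htdef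
      have hf : ∀ i : ℕ, (if i ≤ Q then ((N+1).choose i : ℤ) * ibinom x (Q - i) else 0)
          = ((N+1).choose i : ℤ) * t i := by
        intro i; by_cases h : i ≤ Q <;> simp [htdef, h]
      have hg : ∀ i : ℕ, (if i ≤ Q then (N.choose i : ℤ) * ibinom ((Q : ℤ) - (N:ℕ)) (Q - i) else 0)
          = (N.choose i : ℤ) * (t (i+1) + t i) := by
        intro i
        by_cases h1 : i + 1 ≤ Q
        · have h0 : i ≤ Q := by omega
          simp only [htdef, if_pos h1, if_pos h0]
          rw [pascal i h1]
        · by_cases h0 : i ≤ Q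
          · have hQi : Q - i = 0 := by omega
            have hQi1 : ¬ (i + 1 ≤ Q) := h1
            simp only [htdef, if_neg hQi1, if_pos h0, hQi, zero_add]
            rw [ibinom_zero_right, ibinom_zero_right]
          · simp [htdef, h1, h0]
      calc ∑ i ∈ Finset.range (N + 1 + 1),
            (if i ≤ Q then ((N+1).choose i : ℤ) * ibinom ((Q : ℤ) - ((N+1 : ℕ) : ℤ)) (Q - i) else 0)
          = ∑ i ∈ Finset.range (N + 1 + 1), ((N+1).choose i : ℤ) * t i := by
            refine Finset.sum_congr rfl fun i _ => ?_
            rw [hcast, ← hxdef]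
            exact hf i
        _ = (∑ i ∈ Finset.range (N + 1), ((N+1).choose (i+1) : ℤ) * t (i+1))
              + ((N+1).choose 0 : ℤ) * t 0 := Finset.sum_range_succ' _ _
        _ = (∑ i ∈ Finset.range (N + 1), ((N.choose i : ℤ) * t (i+1) + (N.choose (i+1) : ℤ) * t (i+1)))
              + t 0 := by
            simp only [Nat.choose_succ_succ, Nat.cast_add, Nat.choose_zero_right, Nat.cast_one,
              one_mul, add_mul]
        _ = ∑ i ∈ Finset.range (N + 1), (N.choose i : ℤ) * t (i+1)
              + ((∑ i ∈ Finset.range (N + 1), (N.choose (i+1) : ℤ) * t (i+1)) + t 0) := by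
            rw [Finset.sum_add_distrib]; ring
        _ = ∑ i ∈ Finset.range (N + 1), (N.choose i : ℤ) * t (i+1)
              + ∑ i ∈ Finset.range (N + 1), (N.choose i : ℤ) * t i := by
            congr 1
            have key : ∑ i ∈ Finset.range (N + 1 + 1), (N.choose i : ℤ) * t i
                = (∑ i ∈ Finset.range (N + 1), (N.choose (i+1) : ℤ) * t (i+1))
                  + (N.choose 0 : ℤ) * t 0 := Finset.sum_range_succ' _ _
            have h2 : ∑ i ∈ Finset.range (N + 1 + 1), (N.choose i : ℤ) * t i
                = ∑ i ∈ Finset.range (N + 1), (N.choose i : ℤ) * t i := by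
              rw [Finset.sum_range_succ, Nat.choose_succ_self, Nat.cast_zero, zero_mul, add_zero]
            rw [h2] at key
            simp only [Nat.choose_zero_right, Nat.cast_one, one_mul] at key
            omega
        _ = ∑ i ∈ Finset.range (N + 1), (N.choose i : ℤ) * (t (i+1) + t i) := by
            rw [← Finset.sum_add_distrib]
            exact Finset.sum_congr rfl fun i _ => by ring
        _ = ∑ i ∈ Finset.range (N + 1),
              (if i ≤ Q then (N.choose i : ℤ) * ibinom ((Q : ℤ) - (N:ℕ)) (Q - i) else 0) := by
            exact Finset.sum_congr rfl fun i _ => (hg i).symm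
        _ = 1 := ih


end AuxLemmas

section ZWLemmas

variable {V : Type*} [AddCommGroup V]

lemma zwMul_succ (n : ℕ) (f : ℤ → ℤ → V) (p q : ℤ) :
    zwMul (n + 1) f p q = zwMul n f (p - 1) q - zwMul n f p (q - 1) := by
  rw [zwMul, Finset.sum_range_succ']
  simp only [Nat.cast_add, Nat.cast_one, Nat.cast_zero]
  have hsplit : ∀ i ∈ Finset.range (n + 1),
      ((-1 : ℤ) ^ (i+1) * ((n+1).choose (i+1) : ℤ)) •
          f (p - ((n:ℤ) + 1 - ((i:ℤ) + 1))) (q - ((i:ℤ) + 1))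
      = ((-1 : ℤ) ^ (i+1) * (n.choose (i+1) : ℤ)) • f (p - ((n : ℤ) - (i : ℤ))) (q - ((i:ℤ) + 1))
        + (-((-1 : ℤ) ^ i * (n.choose i : ℤ))) • f (p - ((n : ℤ) - (i : ℤ))) (q - ((i:ℤ) + 1)) := by
    intro i _
    have harg : p - ((n:ℤ) + 1 - ((i:ℤ) + 1)) = p - ((n : ℤ) - (i : ℤ)) := by ring
    rw [harg, ← add_smul]
    congr 1
    rw [Nat.choose_succ_succ, Nat.cast_add, pow_succ]
    ring
  rw [Finset.sum_congr rfl hsplit, Finset.sum_add_distrib]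
  have hA : ∑ i ∈ Finset.range (n + 1),
      ((-1 : ℤ) ^ (i+1) * (n.choose (i+1) : ℤ)) • f (p - ((n : ℤ) - (i : ℤ))) (q - ((i:ℤ) + 1))
      = zwMul n f (p - 1) q
        - ((-1 : ℤ) ^ 0 * (n.choose 0 : ℤ)) • f (p - 1 - ((n : ℤ) - (0:ℤ))) (q - (0:ℤ)) := by
    have expand : zwMul n f (p-1) q = ∑ i ∈ Finset.range (n + 1),
        ((-1 : ℤ) ^ i * (n.choose i : ℤ)) • f (p - 1 - ((n : ℤ) - (i : ℤ))) (q - (i : ℤ)) := rfl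
    rw [expand, Finset.sum_range_succ' (fun i =>
      ((-1 : ℤ) ^ i * (n.choose i : ℤ)) • f (p - 1 - ((n : ℤ) - (i : ℤ))) (q - (i : ℤ)))]
    simp only [Nat.cast_add, Nat.cast_one, Nat.cast_zero]
    have hn1 : ∑ i ∈ Finset.range (n + 1),
        ((-1 : ℤ) ^ (i+1) * (n.choose (i+1) : ℤ)) • f (p - ((n : ℤ) - (i : ℤ))) (q - ((i:ℤ) + 1))
        = ∑ i ∈ Finset.range n,
        ((-1 : ℤ) ^ (i+1) * (n.choose (i+1) : ℤ)) • f (p - ((n : ℤ) - (i : ℤ))) (q - ((i:ℤ) + 1)) := by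
      rw [Finset.sum_range_succ, Nat.choose_succ_self, Nat.cast_zero, mul_zero, zero_smul, add_zero]
    rw [hn1]
    have hcg : ∀ i ∈ Finset.range n,
        ((-1 : ℤ) ^ (i+1) * (n.choose (i+1) : ℤ)) • f (p - ((n : ℤ) - (i : ℤ))) (q - ((i:ℤ) + 1))
        = ((-1 : ℤ) ^ (i+1) * (n.choose (i+1) : ℤ)) •
            f (p - 1 - ((n : ℤ) - ((i:ℤ) + 1))) (q - ((i:ℤ) + 1)) := by
      intro i _
      have : p - ((n : ℤ) - (i : ℤ)) = p - 1 - ((n : ℤ) - ((i:ℤ) + 1)) := by ring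
      rw [this]
    rw [Finset.sum_congr rfl hcg]
    abel
  have hB : ∑ i ∈ Finset.range (n + 1),
      (-((-1 : ℤ) ^ i * (n.choose i : ℤ))) • f (p - ((n : ℤ) - (i : ℤ))) (q - ((i:ℤ) + 1))
      = - zwMul n f p (q - 1) := by
    rw [zwMul, ← Finset.sum_neg_distrib]
    refine Finset.sum_congr rfl fun i _ => ?_
    have h1 : q - ((i:ℤ) + 1) = q - 1 - (i:ℤ) := by ring
    rw [h1, neg_smul]
  rw [hA, hB]
  have h0 : ((-1 : ℤ) ^ 0 * ((n+1).choose 0 : ℤ)) • f (p - ((n:ℤ) + 1 - (0:ℤ))) (q - (0:ℤ))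
      = ((-1 : ℤ) ^ 0 * (n.choose 0 : ℤ)) • f (p - 1 - ((n : ℤ) - (0:ℤ))) (q - (0:ℤ)) := by
    have : p - ((n:ℤ) + 1 - (0:ℤ)) = p - 1 - ((n : ℤ) - (0:ℤ)) := by ring
    rw [this, Nat.choose_zero_right, Nat.choose_zero_right]
  rw [h0]
  abel

lemma zwMul_eq_of_le {n N : ℕ} (f g : ℤ → ℤ → V) (hle : n ≤ N)
    (h : ∀ p q, zwMul n f p q = zwMul n g p q) :
    ∀ p q, zwMul N f p q = zwMul N g p q := by
  induction N with
  | zero => exact (Nat.le_zero.mp hle) ▸ h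
  | succ N ih =>
      rcases Nat.lt_or_ge n (N + 1) with hlt | hge
      · have hN := ih (Nat.lt_succ_iff.mp hlt)
        intro p q
        rw [zwMul_succ, zwMul_succ, hN, hN]
      · have : n = N + 1 := le_antisymm hle hge
        exact this ▸ h


end ZWLemmas

section DeltaLemmas

variable {k : Type*} [CommRing k] {W : Type*} [AddCommGroup W] [Module k W]
  {M : Type*} [AddCommGroup M] [Module k M]

lemma mcompLHS_inner_delta (Mo : VModData k W M) (A B : W) (x : M)
    (hB : ∀ t : ℤ, t ≠ -1 → Mo.YM B t x = 0) (p' q' : ℤ) :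
    VModData.mcompLHS Mo A B x p' q'
      = if 0 ≤ q' then
          negOnePow q' • ibinom (p' + q') q'.toNat • Mo.YM A (-p' - 1 - q') (Mo.YM B (-1) x)
        else 0 := by
  rw [VModData.mcompLHS]
  by_cases hq : 0 ≤ q'
  · rw [if_pos hq]
    congr 1
    have hqn : ((q'.toNat : ℕ) : ℤ) = q' := Int.toNat_of_nonneg hq
    rw [finsum_eq_single _ q'.toNat ?_]
    · have h1 : (q'.toNat : ℤ) - 1 - q' = -1 := by omega
      rw [h1, hqn]
    · intro j hj
      have hne : (j : ℤ) - 1 - q' ≠ -1 := by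
        intro hc
        exact hj (by omega)
      rw [hB _ hne, map_zero, smul_zero]
  · rw [if_neg hq]
    have hz : ∀ j : ℕ, ibinom (p' + (j : ℤ)) j •
        Mo.YM A (-p' - 1 - (j : ℤ)) (Mo.YM B ((j : ℤ) - 1 - q') x) = 0 := by
      intro j
      have hne : (j : ℤ) - 1 - q' ≠ -1 := by omega
      rw [hB _ hne, map_zero, smul_zero]
    simp only [hz, finsum_zero, smul_zero]

lemma mcompLHS_outer_delta (Mo : VModData k W M) (A B : W) (x : M)
    (hA : ∀ (t : ℤ) (y : M), t ≠ -1 → Mo.YM A t y = 0) (p' q' : ℤ) (hp' : 0 ≤ p') :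
    VModData.mcompLHS Mo A B x p' q'
      = if p' = 0 then negOnePow q' • Mo.YM A (-1) (Mo.YM B (-1 - q') x) else 0 := by
  rw [VModData.mcompLHS]
  by_cases hp0 : p' = 0
  · subst hp0
    rw [if_pos rfl]
    congr 1
    rw [finsum_eq_single _ 0 ?_]
    · have h1 : -(0:ℤ) - 1 - ((0:ℕ) : ℤ) = -1 := by norm_num
      have h2 : ((0:ℕ) : ℤ) - 1 - q' = -1 - q' := by norm_num
      rw [h1, h2, ibinom_zero_right, one_smul]
    · intro j hj
      have hne : -(0:ℤ) - 1 - (j : ℤ) ≠ -1 := by omega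
      rw [hA _ _ hne, smul_zero]
  · rw [if_neg hp0]
    have hz : ∀ j : ℕ, ibinom (p' + (j : ℤ)) j •
        Mo.YM A (-p' - 1 - (j : ℤ)) (Mo.YM B ((j : ℤ) - 1 - q') x) = 0 := by
      intro j
      have hne : -p' - 1 - (j : ℤ) ≠ -1 := by omega
      rw [hA _ _ hne, smul_zero]
    simp only [hz, finsum_zero, smul_zero]

lemma negOnePow_smul_cancel {q : ℤ} {v w : M} (h : negOnePow q • v = negOnePow q • w) : v = w := by
  have := congrArg (fun z => negOnePow q • z) h
  simpa [smul_smul, negOnePow_mul_self] using this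

end DeltaLemmas

section MainAux

variable {k : Type*} [Field k] [CharZero k]
    {V : Type*} [AddCommGroup V] [Module k V]
    {H : Type*} [Ring H] [HopfAlgebra k H]
    [Module H V] [IsScalarTower k H V] [SMulCommClass k H V]
    {M : Type*} [AddCommGroup M] [Module k M]

lemma exists_fin_rep (x : H ⊗[k] H) :
    ∃ (m : ℕ) (u v : Fin m → H), x = ∑ i, u i ⊗ₜ[k] v i := by
  obtain ⟨S, rfl⟩ := TensorProduct.exists_finset x
  refine ⟨Fintype.card S, fun i => ((Fintype.equivFin S).symm i).1.1,
    fun i => ((Fintype.equivFin S).symm i).1.2, ?_⟩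
  rw [Equiv.sum_comp (Fintype.equivFin S).symm
    (fun s : S => (s : H × H).1 ⊗ₜ[k] (s : H × H).2)]
  exact (Finset.sum_coe_sort S _).symm

lemma counit_rep {h : H} {m : ℕ} {h1 h2 : Fin m → H}
    (hrep : Coalgebra.comul (R := k) h = ∑ i, h1 i ⊗ₜ[k] h2 i) :
    ∑ i, (Coalgebra.counit (R := k) (h1 i)) • h2 i = h := by
  have h0 := Coalgebra.rTensor_counit_comul (R := k) h
  rw [hrep, map_sum] at h0
  simp only [LinearMap.rTensor_tmul] at h0
  have h3 := congrArg (TensorProduct.lid k H) h0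
  simp only [map_sum, TensorProduct.lid_tmul] at h3
  simpa using h3

lemma smashY_vac_left (F : VAData k V)
    (hF2 : ∀ (a : V) (n : ℤ), F.Y F.vac n a = if n = -1 then a else 0)
    (hHF1 : ∀ h : H, h • F.vac = (Coalgebra.counit (R := k) h) • F.vac)
    {FS : VAData k (V ⊗[k] H)} (hFS : SmashChar H F FS) (h : H) (n : ℤ) :
    FS.Y (F.vac ⊗ₜ[k] h) n (F.vac ⊗ₜ[k] (1 : H)) = if n = -1 then F.vac ⊗ₜ[k] h else 0 := by
  obtain ⟨m, h1, h2, hrep⟩ := exists_fin_rep (Coalgebra.comul (R := k) h)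
  rw [hFS.1 F.vac F.vac h 1 n m h1 h2 hrep]
  by_cases hn : n = -1
  · subst hn
    rw [if_pos rfl]
    have hterm : ∀ i : Fin m, F.Y F.vac (-1) (h1 i • F.vac) ⊗ₜ[k] (h2 i * 1)
        = F.vac ⊗ₜ[k] ((Coalgebra.counit (R := k) (h1 i)) • h2 i) := by
      intro i
      rw [hF2, if_pos rfl, hHF1, mul_one, TensorProduct.smul_tmul]
    rw [Finset.sum_congr rfl fun i _ => hterm i, ← TensorProduct.tmul_sum,
      counit_rep hrep]
  · rw [if_neg hn]
    refine Finset.sum_eq_zero fun i _ => ?_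
    rw [hF2, if_neg hn, TensorProduct.zero_tmul]

lemma smashY_delta (F : VAData k V)
    (hF2 : ∀ (a : V) (n : ℤ), F.Y F.vac n a = if n = -1 then a else 0)
    {FS : VAData k (V ⊗[k] H)} (hFS : SmashChar H F FS) (h : H) (a : V) (n : ℤ)
    {m : ℕ} {h1 h2 : Fin m → H}
    (hrep : Coalgebra.comul (R := k) h = ∑ i, h1 i ⊗ₜ[k] h2 i) :
    FS.Y (F.vac ⊗ₜ[k] h) n (a ⊗ₜ[k] (1 : H))
      = if n = -1 then ∑ i, (h1 i • a) ⊗ₜ[k] (h2 i) else 0 := by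
  rw [hFS.1 F.vac a h 1 n m h1 h2 hrep]
  by_cases hn : n = -1
  · subst hn
    rw [if_pos rfl]
    refine Finset.sum_congr rfl fun i _ => ?_
    rw [hF2, if_pos rfl, mul_one]
  · rw [if_neg hn]
    refine Finset.sum_eq_zero fun i _ => ?_
    rw [hF2, if_neg hn, TensorProduct.zero_tmul]

lemma smashY_creation (F : VAData k V) {FS : VAData k (V ⊗[k] H)} (hFS : SmashChar H F FS)
    (a : V) (h : H) (n : ℤ) :
    FS.Y (a ⊗ₜ[k] (1 : H)) n (F.vac ⊗ₜ[k] h) = (F.Y a n F.vac) ⊗ₜ[k] h := by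
  have hone : Coalgebra.comul (R := k) (1 : H) = ∑ _i : Fin 1, (1 : H) ⊗ₜ[k] (1 : H) := by
    rw [Bialgebra.comul_one, Fin.sum_univ_one, Algebra.TensorProduct.one_def]
  rw [hFS.1 a F.vac 1 h n 1 (fun _ => 1) (fun _ => 1) hone, Fin.sum_univ_one, one_smul, one_mul]

lemma vacH_delta (F : VAData k V) (hF : F.IsVertexAlgebra) (hHF : IsHModuleFA H F)
    (FS : VAData k (V ⊗[k] H)) (hFS : SmashChar H F FS)
    (Mo : VModData k (V ⊗[k] H) M) (hMo : VModData.IsModule FS Mo) :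
    ∀ (h : H) (x : M) (n : ℤ), n ≠ -1 → Mo.YM (F.vac ⊗ₜ[k] h) n x = 0 := by
  intro h x n hn
  obtain ⟨N, hN⟩ := hMo.2.2.2 (F.vac ⊗ₜ[k] h) FS.vac x
  have hvacY := hF.1.1.2.1
  have hfield : ∀ m' : ℤ, FS.Y (F.vac ⊗ₜ[k] h) m' FS.vac
      = if m' = -1 then F.vac ⊗ₜ[k] h else 0 := by
    intro m'
    rw [hFS.2.1]
    exact smashY_vac_left F hvacY hHF.1 hFS h m'
  have hMvac : ∀ t : ℤ, t ≠ -1 → Mo.YM FS.vac t x = 0 := fun t ht => by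
    rw [hMo.2.1, if_neg ht]
  have hMvac1 : Mo.YM FS.vac (-1) x = x := by rw [hMo.2.1, if_pos rfl]
  have hL : ∀ p' q', VModData.mcompLHS Mo (F.vac ⊗ₜ[k] h) FS.vac x p' q'
      = if 0 ≤ q' then
          negOnePow q' • ibinom (p' + q') q'.toNat • Mo.YM (F.vac ⊗ₜ[k] h) (-p' - 1 - q') x
        else 0 := by
    intro p' q'
    rw [mcompLHS_inner_delta Mo _ _ x hMvac p' q', hMvac1]
  have hR : ∀ p' q', VModData.mcompRHS FS Mo (F.vac ⊗ₜ[k] h) FS.vac x p' q'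
      = if p' = 0 then negOnePow q' • Mo.YM (F.vac ⊗ₜ[k] h) (-q' - 1) x else 0 := by
    intro p' q'
    rw [VModData.mcompRHS, hfield]
    by_cases hp : p' = 0
    · rw [if_pos hp, if_pos (by omega : -p' - 1 = -1)]
    · rw [if_neg (by omega : ¬ (-p' - 1 = -1)), if_neg hp, map_zero]
      simp
  by_cases hge : 0 ≤ n
  · -- n ≥ 0 : evaluate at p = N, q = -n-1
    have key := hN (N : ℤ) (-n - 1)
    simp only [zwMul] at key
    have hLeft : ∑ i ∈ Finset.range (N + 1), ((-1 : ℤ) ^ i * (N.choose i : ℤ)) •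
        VModData.mcompLHS Mo (F.vac ⊗ₜ[k] h) FS.vac x
          ((N : ℤ) - ((N : ℤ) - (i : ℤ))) (-n - 1 - (i : ℤ)) = 0 := by
      refine Finset.sum_eq_zero fun i _ => ?_
      rw [hL, if_neg (by omega), smul_zero]
    have hRight : ∑ i ∈ Finset.range (N + 1), ((-1 : ℤ) ^ i * (N.choose i : ℤ)) •
        VModData.mcompRHS FS Mo (F.vac ⊗ₜ[k] h) FS.vac x
          ((N : ℤ) - ((N : ℤ) - (i : ℤ))) (-n - 1 - (i : ℤ))
        = negOnePow (-n - 1) • Mo.YM (F.vac ⊗ₜ[k] h) n x := by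
      rw [Finset.sum_eq_single_of_mem 0 (Finset.mem_range.mpr (Nat.succ_pos N))
        (fun i _ hi => by rw [hR, if_neg (by omega), smul_zero])]
      rw [hR, if_pos (by omega)]
      have h1 : -n - 1 - ((0:ℕ) : ℤ) = -n - 1 := by norm_num
      rw [h1]
      rw [show -(-n - 1) - 1 = n by ring]
      norm_num
    rw [hLeft, hRight] at key
    exact negOnePow_smul_cancel (q := -n - 1) (by rw [smul_zero]; exact key.symm)
  · -- n ≤ -2 : evaluate at p = N - n - 1, q = 0
    have key := hN ((N : ℤ) - n - 1) 0
    simp only [zwMul] at key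
    have hLeft : ∑ i ∈ Finset.range (N + 1), ((-1 : ℤ) ^ i * (N.choose i : ℤ)) •
        VModData.mcompLHS Mo (F.vac ⊗ₜ[k] h) FS.vac x
          ((N : ℤ) - n - 1 - ((N : ℤ) - (i : ℤ))) (0 - (i : ℤ))
        = Mo.YM (F.vac ⊗ₜ[k] h) n x := by
      rw [Finset.sum_eq_single_of_mem 0 (Finset.mem_range.mpr (Nat.succ_pos N))
        (fun i _ hi => by rw [hL, if_neg (by omega), smul_zero])]
      rw [hL, if_pos (by omega)]
      have h1 : (0 : ℤ) - ((0:ℕ) : ℤ) = 0 := by norm_num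
      rw [h1]
      have h2 : -((N : ℤ) - n - 1 - ((N : ℤ) - ((0:ℕ) : ℤ))) - 1 - 0 = n := by push_cast; ring
      rw [h2, negOnePow_zero, Int.toNat_zero, ibinom_zero_right]
      norm_num
    have hRight : ∑ i ∈ Finset.range (N + 1), ((-1 : ℤ) ^ i * (N.choose i : ℤ)) •
        VModData.mcompRHS FS Mo (F.vac ⊗ₜ[k] h) FS.vac x
          ((N : ℤ) - n - 1 - ((N : ℤ) - (i : ℤ))) (0 - (i : ℤ)) = 0 := by
      refine Finset.sum_eq_zero fun i _ => ?_
      rw [hR, if_neg (by omega), smul_zero]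
    rw [hLeft, hRight] at key
    exact key

lemma smash_module_assoc_ii (F : VAData k V) (hF : F.IsVertexAlgebra) (hHF : IsHModuleFA H F)
    (FS : VAData k (V ⊗[k] H)) (hFS : SmashChar H F FS)
    (Mo : VModData k (V ⊗[k] H) M) (hMo : VModData.IsModule FS Mo) :
    ∀ (a : V) (h : H) (n : ℤ) (x : M),
      Mo.YM (a ⊗ₜ[k] h) n x = Mo.YM (a ⊗ₜ[k] (1 : H)) n (Mo.YM (F.vac ⊗ₜ[k] h) (-1) x) := by
  intro a h n x
  obtain ⟨N₀, hN₀⟩ := hMo.2.2.2 (a ⊗ₜ[k] (1 : H)) (F.vac ⊗ₜ[k] h) x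
  set N := N₀ + (n + 1).toNat with hNdef
  have hN := zwMul_eq_of_le _ _ (Nat.le_add_right N₀ ((n + 1).toNat)) hN₀
  have hng : (0 : ℤ) ≤ (N : ℤ) - 1 - n := by
    have h1 : (n + 1 : ℤ) ≤ ((n + 1).toNat : ℤ) := Int.self_le_toNat _
    have h2 : ((n + 1).toNat : ℤ) ≤ (N : ℤ) := by
      rw [hNdef]; push_cast; omega
    omega
  set Q : ℕ := ((N : ℤ) - 1 - n).toNat with hQdef
  have hQ : (Q : ℤ) = (N : ℤ) - 1 - n := Int.toNat_of_nonneg hng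
  have key := hN 0 (Q : ℤ)
  simp only [zwMul] at key
  have hcrea0 := hF.1.1.2.2.1
  have hcrea1 := hF.1.1.2.2.2.1
  have hRight : ∑ i ∈ Finset.range (N + 1), ((-1 : ℤ) ^ i * (N.choose i : ℤ)) •
      VModData.mcompRHS FS Mo (a ⊗ₜ[k] (1 : H)) (F.vac ⊗ₜ[k] h) x
        ((0 : ℤ) - ((N : ℤ) - (i : ℤ))) ((Q : ℤ) - (i : ℤ))
      = negOnePow (Q : ℤ) • Mo.YM (a ⊗ₜ[k] h) n x := by
    rw [Finset.sum_eq_single_of_mem N (Finset.self_mem_range_succ N) ?side]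
    case side =>
      intro i hi hiN
      rw [VModData.mcompRHS]
      have hidx : -((0 : ℤ) - ((N : ℤ) - (i : ℤ))) - 1 = (N : ℤ) - (i : ℤ) - 1 := by ring
      rw [hidx, smashY_creation F hFS a h _,
        hcrea0 a _ (by simp only [Finset.mem_range] at hi; omega), TensorProduct.zero_tmul,
        map_zero]
      simp
    rw [VModData.mcompRHS]
    rw [show -((0 : ℤ) - ((N : ℤ) - (N : ℤ))) - 1 = -1 by ring]
    rw [smashY_creation F hFS a h (-1), hcrea1 a]
    rw [show -((Q : ℤ) - (N : ℤ)) - 1 = n by omega]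
    rw [Nat.choose_self, Nat.cast_one, mul_one, smul_smul, negOnePow_sub_natCast (Q : ℤ) N]
    rw [show (-1 : ℤ) ^ N * ((-1 : ℤ) ^ N * negOnePow (Q : ℤ)) = negOnePow (Q : ℤ) by
      rw [← mul_assoc, neg_one_pow_mul_self, one_mul]]
  have hdelta : ∀ t : ℤ, t ≠ -1 → Mo.YM (F.vac ⊗ₜ[k] h) t x = 0 := fun t ht =>
    vacH_delta F hF hHF FS hFS Mo hMo h x t ht
  have hL : ∀ p' q', VModData.mcompLHS Mo (a ⊗ₜ[k] (1 : H)) (F.vac ⊗ₜ[k] h) x p' q'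
      = if 0 ≤ q' then
          negOnePow q' • ibinom (p' + q') q'.toNat •
            Mo.YM (a ⊗ₜ[k] (1 : H)) (-p' - 1 - q') (Mo.YM (F.vac ⊗ₜ[k] h) (-1) x)
        else 0 := fun p' q' => mcompLHS_inner_delta Mo _ _ x hdelta p' q'
  have hLeft : ∑ i ∈ Finset.range (N + 1), ((-1 : ℤ) ^ i * (N.choose i : ℤ)) •
      VModData.mcompLHS Mo (a ⊗ₜ[k] (1 : H)) (F.vac ⊗ₜ[k] h) x
        ((0 : ℤ) - ((N : ℤ) - (i : ℤ))) ((Q : ℤ) - (i : ℤ))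
      = negOnePow (Q : ℤ) • Mo.YM (a ⊗ₜ[k] (1 : H)) n (Mo.YM (F.vac ⊗ₜ[k] h) (-1) x) := by
    have hterm : ∀ i ∈ Finset.range (N + 1),
        ((-1 : ℤ) ^ i * (N.choose i : ℤ)) •
          VModData.mcompLHS Mo (a ⊗ₜ[k] (1 : H)) (F.vac ⊗ₜ[k] h) x
            ((0 : ℤ) - ((N : ℤ) - (i : ℤ))) ((Q : ℤ) - (i : ℤ))
        = (if i ≤ Q then (N.choose i : ℤ) * ibinom ((Q : ℤ) - (N : ℤ)) (Q - i) else 0) •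
            (negOnePow (Q : ℤ) •
              Mo.YM (a ⊗ₜ[k] (1 : H)) n (Mo.YM (F.vac ⊗ₜ[k] h) (-1) x)) := by
      intro i _
      rw [hL]
      by_cases hiQ : i ≤ Q
      · rw [if_pos (by omega : (0 : ℤ) ≤ (Q : ℤ) - (i : ℤ)), if_pos hiQ]
        rw [show (0 : ℤ) - ((N : ℤ) - (i : ℤ)) + ((Q : ℤ) - (i : ℤ)) = (Q : ℤ) - (N : ℤ) by ring]
        rw [show -((0 : ℤ) - ((N : ℤ) - (i : ℤ))) - 1 - ((Q : ℤ) - (i : ℤ)) = n by omega]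
        rw [show ((Q : ℤ) - (i : ℤ)).toNat = Q - i by omega]
        simp only [smul_smul]
        congr 1
        rw [negOnePow_sub_natCast (Q : ℤ) i]
        linear_combination ((N.choose i : ℤ) * ibinom ((Q : ℤ) - (N : ℤ)) (Q - i) *
          negOnePow (Q : ℤ)) * (neg_one_pow_mul_self i)
      · rw [if_neg (by omega : ¬ (0 : ℤ) ≤ (Q : ℤ) - (i : ℤ)), if_neg hiQ, smul_zero, zero_smul]
    rw [Finset.sum_congr rfl hterm, ← Finset.sum_smul, beta_sum N Q, one_smul]
  rw [hLeft, hRight] at key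
  exact negOnePow_smul_cancel key.symm

end MainAux

/-- Let `(M, Y_M, s_M)` be a left module over the smash product
`V#H`, viewed as an `H`-module via `h·m = Res_z z⁻¹ Y_M(1#h,z)m = (1#h)₋₁m` and as a
`V`-module via `Y_M(a#1,z)`.  Then for all `a ∈ V`, `h ∈ H`, `m ∈ M`:
(i) `h·(Y_M(a#1,z)m) = ∑ Y_M(h₁a#1,z)(h₂·m)`, and
(ii) `Y_M(a#h,z)m = Y_M(a#1,z)(h·m)`. -/
theorem statement15 {k : Type*} [Field k] [CharZero k]
    {V : Type*} [AddCommGroup V] [Module k V]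
    {H : Type*} [Ring H] [HopfAlgebra k H]
    [Module H V] [IsScalarTower k H V] [SMulCommClass k H V]
    {M : Type*} [AddCommGroup M] [Module k M]
    (F : VAData k V) (hF : F.IsVertexAlgebra) (hHF : IsHModuleFA H F)
    (FS : VAData k (V ⊗[k] H)) (hFS : SmashChar H F FS) (hFSla : FS.IsSLocalVA)
    (Mo : VModData k (V ⊗[k] H) M) (hMo : VModData.IsModule FS Mo) :
    -- (i)
    (∀ (h : H) (a : V) (x : M) (n : ℤ) (m : ℕ) (h1 h2 : Fin m → H),
      Coalgebra.comul (R := k) h = ∑ i, h1 i ⊗ₜ[k] h2 i →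
      Mo.YM (F.vac ⊗ₜ[k] h) (-1) (Mo.YM (a ⊗ₜ[k] (1 : H)) n x)
        = ∑ i, Mo.YM ((h1 i • a) ⊗ₜ[k] (1 : H)) n
            (Mo.YM (F.vac ⊗ₜ[k] (h2 i)) (-1) x)) ∧
    -- (ii)
    (∀ (a : V) (h : H) (n : ℤ) (x : M),
      Mo.YM (a ⊗ₜ[k] h) n x
        = Mo.YM (a ⊗ₜ[k] (1 : H)) n (Mo.YM (F.vac ⊗ₜ[k] h) (-1) x)) := by
  refine ⟨?_, fun a h n x => smash_module_assoc_ii F hF hHF FS hFS Mo hMo a h n x⟩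
  intro h a x n m h1 h2 hrep
  obtain ⟨N, hN⟩ := hMo.2.2.2 (F.vac ⊗ₜ[k] h) (a ⊗ₜ[k] (1 : H)) x
  have key := hN (N : ℤ) (-1 - n)
  simp only [zwMul] at key
  have hdelta : ∀ (t : ℤ) (y : M), t ≠ -1 → Mo.YM (F.vac ⊗ₜ[k] h) t y = 0 := fun t y ht =>
    vacH_delta F hF hHF FS hFS Mo hMo h y t ht
  have hLeft : ∑ i ∈ Finset.range (N + 1), ((-1 : ℤ) ^ i * (N.choose i : ℤ)) •
      VModData.mcompLHS Mo (F.vac ⊗ₜ[k] h) (a ⊗ₜ[k] (1 : H)) x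
        ((N : ℤ) - ((N : ℤ) - (i : ℤ))) (-1 - n - (i : ℤ))
      = negOnePow (-1 - n) • Mo.YM (F.vac ⊗ₜ[k] h) (-1) (Mo.YM (a ⊗ₜ[k] (1 : H)) n x) := by
    rw [Finset.sum_eq_single_of_mem 0 (Finset.mem_range.mpr (Nat.succ_pos N)) ?side0]
    case side0 =>
      intro i hi hi0
      rw [mcompLHS_outer_delta Mo _ _ x hdelta _ _
        (by omega : (0 : ℤ) ≤ (N : ℤ) - ((N : ℤ) - (i : ℤ)))]
      rw [if_neg (by omega : ¬ ((N : ℤ) - ((N : ℤ) - (i : ℤ)) = 0)), smul_zero]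
    rw [mcompLHS_outer_delta Mo _ _ x hdelta _ _
      (by omega : (0 : ℤ) ≤ (N : ℤ) - ((N : ℤ) - ((0 : ℕ) : ℤ)))]
    rw [if_pos (by omega : (N : ℤ) - ((N : ℤ) - ((0 : ℕ) : ℤ)) = 0)]
    rw [show (-1 : ℤ) - n - ((0 : ℕ) : ℤ) = -1 - n by norm_num]
    rw [show (-1 : ℤ) - (-1 - n) = n by ring]
    norm_num
  have hfield3 : ∀ t : ℤ, FS.Y (F.vac ⊗ₜ[k] h) t (a ⊗ₜ[k] (1 : H))
      = if t = -1 then ∑ i, (h1 i • a) ⊗ₜ[k] (h2 i) else 0 := fun t =>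
    smashY_delta F hF.1.1.2.1 hFS h a t hrep
  have hRight : ∑ i ∈ Finset.range (N + 1), ((-1 : ℤ) ^ i * (N.choose i : ℤ)) •
      VModData.mcompRHS FS Mo (F.vac ⊗ₜ[k] h) (a ⊗ₜ[k] (1 : H)) x
        ((N : ℤ) - ((N : ℤ) - (i : ℤ))) (-1 - n - (i : ℤ))
      = negOnePow (-1 - n) •
          ∑ i, Mo.YM ((h1 i • a) ⊗ₜ[k] (1 : H)) n (Mo.YM (F.vac ⊗ₜ[k] (h2 i)) (-1) x) := by
    rw [Finset.sum_eq_single_of_mem 0 (Finset.mem_range.mpr (Nat.succ_pos N)) ?side1]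
    case side1 =>
      intro i hi hi0
      rw [VModData.mcompRHS, hfield3,
        if_neg (by omega : ¬ (-((N : ℤ) - ((N : ℤ) - (i : ℤ))) - 1 = -1)), map_zero]
      simp
    rw [VModData.mcompRHS]
    rw [show -((N : ℤ) - ((N : ℤ) - ((0 : ℕ) : ℤ))) - 1 = -1 by norm_num]
    rw [hfield3, if_pos rfl]
    rw [show (-1 : ℤ) - n - ((0 : ℕ) : ℤ) = -1 - n by norm_num]
    rw [show -(-1 - n) - 1 = n by ring]
    simp only [map_sum, Finset.sum_apply, LinearMap.sum_apply]
    rw [Finset.sum_congr rfl (fun i _ =>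
      smash_module_assoc_ii F hF hHF FS hFS Mo hMo (h1 i • a) (h2 i) n x)]
    norm_num
  rw [hLeft, hRight] at key
  exact negOnePow_smul_cancel key

end HopfVA
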